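/- arXiv:2502.07048 — 2 statements merged into one kernel-verified Lean document; each statement's English description precedes it below -/
import Mathlib

section
/- Let I ⊆ R be a bihomogeneous ideal with V(I) nonempty, generated in bidegrees componentwise ≤ (a,b), and such that HF_{R/I}(a,b) = HF_{R/I}(a+1,b). Then (a,b) is an admissible bidegree for I if and only if HF_{R/(I+⟨h'⟩)}(a,b) = 0 for every linear form h' of bidegree (1,0) in a nonempty Zariski-open subset of the space R_{(1,0)} of such forms (i.e., for a generic linear form h' ∈ R_{(1,0)}). -/
open MvPolynomial

set_option maxHeartbeats 1000000

noncomputable section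

/-- The variables of the bigraded ring: `x₀,…,xₙ` and `y₀,…,y_m`. -/
abbrev Vars (n m : ℕ) := Fin (n+1) ⊕ Fin (m+1)

/-- The bigrading weight: `deg xᵢ = (1,0)`, `deg y_j = (0,1)`. -/
def wB (n m : ℕ) : Vars n m → ℕ × ℕ := Sum.elim (fun _ => (1, 0)) (fun _ => (0, 1))

/-- The bigraded polynomial ring `R = k[x₀,…,xₙ,y₀,…,y_m]`. -/
abbrev BiRing (k : Type*) [Field k] (n m : ℕ) := MvPolynomial (Vars n m) k

variable (k : Type*) [Field k] (n m : ℕ)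

/-- The `k`-vector space of bihomogeneous polynomials of bidegree `d`. -/
def biComponent (d : ℕ × ℕ) : Submodule k (BiRing k n m) :=
  weightedHomogeneousSubmodule k (wB n m) d

/-- An ideal is bihomogeneous if it is generated by bihomogeneous elements. -/
def IsBihomogeneous (I : Ideal (BiRing k n m)) : Prop :=
  ∃ S : Set (BiRing k n m), Ideal.span S = I ∧
    ∀ f ∈ S, ∃ d : ℕ × ℕ, f.IsWeightedHomogeneous (wB n m) d

/-- `I` is generated in bidegrees componentwise at most `(a,b)`. -/
def GenInDegLE (I : Ideal (BiRing k n m)) (a b : ℕ) : Prop :=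
  ∃ S : Set (BiRing k n m), Ideal.span S = I ∧
    ∀ f ∈ S, ∃ d : ℕ × ℕ, d.1 ≤ a ∧ d.2 ≤ b ∧ f.IsWeightedHomogeneous (wB n m) d

/-- The Hilbert function `HF_{R/I}(a,b) = dim_k (R/I)_{(a,b)}`, where `(R/I)_{(a,b)}` is the
image of the bidegree-`(a,b)` component of `R` in `R/I`. -/
def HF (I : Ideal (BiRing k n m)) (a b : ℕ) : ℕ :=
  Module.finrank k ((biComponent k n m (a, b)).map (Ideal.Quotient.mkₐ k I).toLinearMap)

/-- `h` is an admissible linear form for `I` at bidegree `(a,b)`:  `h` has bidegree `(1,0)`,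
`HF_{R/I}(a,b) = HF_{R/I}(a+1,b)` and `HF_{R/(I+⟨h⟩)}(a,b) = 0`. -/
def IsAdmissibleForm (I : Ideal (BiRing k n m)) (a b : ℕ) (h : BiRing k n m) : Prop :=
  h.IsWeightedHomogeneous (wB n m) (1, 0) ∧
  HF k n m I a b = HF k n m I (a+1) b ∧
  HF k n m (I ⊔ Ideal.span {h}) a b = 0

/-- `(a,b)` is an admissible bidegree for `I`: `I` is generated in bidegrees `≤ (a,b)` and
there is an admissible linear form for `(a,b)`. -/
def IsAdmissible (I : Ideal (BiRing k n m)) (a b : ℕ) : Prop :=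
  GenInDegLE k n m I a b ∧ ∃ h, IsAdmissibleForm k n m I a b h

/-- The subring `R_X = k[x₀,…,xₙ]`. -/
abbrev XRing (k : Type*) [Field k] (n : ℕ) := MvPolynomial (Fin (n+1)) k

/-- The inclusion `R_X = k[x₀,…,xₙ] → R`. -/
def ιX : XRing k n →ₐ[k] BiRing k n m := rename Sum.inl

/-- The irrelevant ideal `𝔪_y = ⟨y₀,…,y_m⟩ ⊆ R`. -/
def myId : Ideal (BiRing k n m) := Ideal.span (Set.range fun j : Fin (m+1) => X (Sum.inr j))

/-- The irrelevant ideal `𝔪_x = ⟨x₀,…,xₙ⟩ ⊆ R`. -/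
def mxId : Ideal (BiRing k n m) := Ideal.span (Set.range fun i : Fin (n+1) => X (Sum.inl i))

/-- The ideal `J_b = (I : 𝔪_y^b) ∩ R_X ⊆ R_X`. -/
def Jb (I : Ideal (BiRing k n m)) (b : ℕ) : Ideal (XRing k n) :=
  (Submodule.colon I ((myId k n m ^ b : Ideal (BiRing k n m)) : Set (BiRing k n m))).comap (ιX k n m)

variable (K : Type*) [Field K] [Algebra k K]

/-- The zero locus in `ℙⁿ(K)` of an ideal `J ⊆ R_X`. -/
def projZeros (J : Ideal (XRing k n)) : Set (Projectivization K (Fin (n+1) → K)) :=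
  {ξ | ∀ f ∈ J, aeval ξ.rep f = 0}

/-- The biprojective zero locus `V(I) ⊆ ℙⁿ(K) × ℙᵐ(K)` of a bihomogeneous ideal `I ⊆ R`. -/
def biprojZeros (I : Ideal (BiRing k n m)) :
    Set (Projectivization K (Fin (n+1) → K) × Projectivization K (Fin (m+1) → K)) :=
  {p | ∀ f ∈ I, aeval (Sum.elim p.1.rep p.2.rep) f = 0}

/-- The projection `π(V(I)) ⊆ ℙⁿ(K)` of `V(I)` onto the first factor. -/
def piV (I : Ideal (BiRing k n m)) : Set (Projectivization K (Fin (n+1) → K)) :=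
  Prod.fst '' biprojZeros k n m K I

/-- The bilinear form of bidegree `(1,0)` with coefficient vector `v`: `∑ᵢ vᵢ xᵢ`. -/
def linForm (v : Fin (n+1) → k) : BiRing k n m := ∑ i, C (v i) * X (Sum.inl i)

/-! ### Auxiliary lemmas for Statement 5 -/

set_option maxHeartbeats 2000000 in
lemma aux_map_finsum' {R M N α : Type*} [Semiring R] [AddCommMonoid M] [AddCommMonoid N]
    [Module R M] [Module R N] (g : M →ₗ[R] N) {f : α → M} (hf : (Function.support f).Finite) :
    g (∑ᶠ i, f i) = ∑ᶠ i, g (f i) :=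
  g.toAddMonoidHom.map_finsum hf

lemma aux_weight_fst (s : Vars n m →₀ ℕ) :
    (Finsupp.weight (wB n m) s).1 = Finsupp.weight (fun v => (wB n m v).1) s := by
  simp only [Finsupp.weight_apply, Finsupp.sum, Prod.fst_sum, Prod.smul_mk, smul_eq_mul]
  rfl

lemma aux_weight_snd (s : Vars n m →₀ ℕ) :
    (Finsupp.weight (wB n m) s).2 = Finsupp.weight (fun v => (wB n m v).2) s := by
  simp only [Finsupp.weight_apply, Finsupp.sum, Prod.snd_sum, Prod.smul_mk, smul_eq_mul]
  rfl

lemma aux_le_weight_wB (s : Vars n m →₀ ℕ) (v : Vars n m) :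
    s v ≤ (Finsupp.weight (wB n m) s).1 + (Finsupp.weight (wB n m) s).2 := by
  rw [aux_weight_fst, aux_weight_snd]
  cases v with
  | inl i =>
    refine le_trans (Finsupp.le_weight _ ?_ s) (Nat.le_add_right _ _)
    simp [wB]
  | inr j =>
    refine le_trans (Finsupp.le_weight _ ?_ s) (Nat.le_add_left _ _)
    simp [wB]

instance aux_biComponent_findim (d : ℕ × ℕ) : FiniteDimensional k (biComponent k n m d) := by
  apply Submodule.finiteDimensional_of_le (S₂ := restrictDegree (Vars n m) k (d.1 + d.2))
  intro p hp
  rw [mem_restrictDegree]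
  intro s hs v
  have h1 := hp (mem_support_iff.mp hs)
  calc s v ≤ _ := aux_le_weight_wB n m s v
  _ = d.1 + d.2 := by rw [h1]

lemma aux_HF_eq_zero_iff (I : Ideal (BiRing k n m)) (a b : ℕ) :
    HF k n m I a b = 0 ↔ biComponent k n m (a, b) ≤ I.restrictScalars k := by
  haveI : NoZeroSMulDivisors k (BiRing k n m ⧸ I) :=
    ⟨fun {c x} h => by
      by_cases hc : c = 0
      · exact Or.inl hc
      · exact Or.inr (by
          have := congrArg (fun y => c⁻¹ • y) h
          simpa [smul_smul, inv_mul_cancel₀ hc] using this)⟩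
  have hkey : ∀ f : BiRing k n m,
      (Ideal.Quotient.mkₐ k I).toLinearMap f = 0 ↔ f ∈ I := by
    intro f
    show Ideal.Quotient.mk I f = 0 ↔ f ∈ I
    exact Ideal.Quotient.eq_zero_iff_mem
  have : FiniteDimensional k
      ((biComponent k n m (a, b)).map (Ideal.Quotient.mkₐ k I).toLinearMap) :=
    Module.Finite.map _ _
  rw [HF, Submodule.finrank_eq_zero]
  constructor
  · intro h f hf
    have hm : (Ideal.Quotient.mkₐ k I).toLinearMap f ∈
        (biComponent k n m (a, b)).map (Ideal.Quotient.mkₐ k I).toLinearMap :=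
      Submodule.mem_map_of_mem hf
    rw [h, Submodule.mem_bot] at hm
    exact (hkey f).mp hm
  · intro h
    rw [Submodule.eq_bot_iff]
    rintro x ⟨f, hf, rfl⟩
    exact (hkey f).mpr (h hf)

lemma aux_component_mem_of_mem {I : Ideal (BiRing k n m)} (hI : IsBihomogeneous k n m I)
    {f : BiRing k n m} (hf : f ∈ I) (d : ℕ × ℕ) :
    weightedHomogeneousComponent (wB n m) d f ∈ I := by
  letI : GradedAlgebra (weightedHomogeneousSubmodule k (wB n m)) :=
    weightedGradedAlgebra k (wB n m)
  obtain ⟨S, rfl, hS⟩ := hI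
  have hhom : (Ideal.span S).IsHomogeneous (weightedHomogeneousSubmodule k (wB n m)) :=
    Ideal.homogeneous_span _ S (fun x hx => by
      obtain ⟨d, hd⟩ := hS x hx
      exact ⟨d, (mem_weightedHomogeneousSubmodule _ _ _ _).mpr hd⟩)
  have := hhom d hf
  rwa [show ((DirectSum.decompose (weightedHomogeneousSubmodule k (wB n m)) f d : _)
      : BiRing k n m)
      = weightedHomogeneousComponent (wB n m) d f from decompose'_apply k (wB n m) f d] at this

lemma aux_wHC_mul_succ {g h : BiRing k n m} (hh : h.IsWeightedHomogeneous (wB n m) (1,0))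
    (a b : ℕ) :
    weightedHomogeneousComponent (wB n m) (a+1,b) (g*h)
      = (weightedHomogeneousComponent (wB n m) (a,b) g) * h := by
  have hfin : (Function.support fun d => weightedHomogeneousComponent (wB n m) d g).Finite :=
    weightedHomogeneousComponent_finsupp g
  have hfin2 : (Function.support fun d =>
      weightedHomogeneousComponent (wB n m) d g * h).Finite :=
    hfin.subset (by
      intro d hd
      simp only [Function.mem_support] at hd ⊢
      intro h0; apply hd; rw [h0, zero_mul])
  conv_lhs => rw [show g = ∑ᶠ d, weightedHomogeneousComponent (wB n m) d g from
     (sum_weightedHomogeneousComponent (wB n m) g).symm]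
  rw [finsum_mul _ _, aux_map_finsum' _ hfin2]
  rw [finsum_eq_single _ ((a, b) : ℕ × ℕ)]
  · exact weightedHomogeneousComponent_eq_self
      ((weightedHomogeneousComponent_isWeightedHomogeneous (a,b) g).mul hh)
  · intro d hd
    refine IsWeightedHomogeneous.weightedHomogeneousComponent_ne _
      ((weightedHomogeneousComponent_isWeightedHomogeneous d g).mul hh) ?_
    intro hcon
    apply hd
    have h2 : d + (1,0) = ((a,b) : ℕ × ℕ) + (1,0) := by
      rw [← hcon]; ext <;> simp [Prod.ext_iff]
    exact add_right_cancel h2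

lemma aux_wHC_mul_zero {g h : BiRing k n m} (hh : h.IsWeightedHomogeneous (wB n m) (1,0))
    (b : ℕ) :
    weightedHomogeneousComponent (wB n m) (0,b) (g*h) = 0 := by
  have hfin : (Function.support fun d => weightedHomogeneousComponent (wB n m) d g).Finite :=
    weightedHomogeneousComponent_finsupp g
  have hfin2 : (Function.support fun d =>
      weightedHomogeneousComponent (wB n m) d g * h).Finite :=
    hfin.subset (by
      intro d hd
      simp only [Function.mem_support] at hd ⊢
      intro h0; apply hd; rw [h0, zero_mul])
  conv_lhs => rw [show g = ∑ᶠ d, weightedHomogeneousComponent (wB n m) d g from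
     (sum_weightedHomogeneousComponent (wB n m) g).symm]
  rw [finsum_mul _ _, aux_map_finsum' _ hfin2]
  apply finsum_eq_zero_of_forall_eq_zero
  intro d
  refine IsWeightedHomogeneous.weightedHomogeneousComponent_ne _
    ((weightedHomogeneousComponent_isWeightedHomogeneous d g).mul hh) ?_
  intro hcon
  have := congrArg Prod.fst hcon
  simp at this

lemma aux_mem_decomp_succ {I : Ideal (BiRing k n m)} (hI : IsBihomogeneous k n m I)
    {h : BiRing k n m} (hh : h.IsWeightedHomogeneous (wB n m) (1,0)) {a b : ℕ}
    {f : BiRing k n m} (hf : f ∈ biComponent k n m (a+1,b)) (hfJ : f ∈ I ⊔ Ideal.span {h}) :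
    ∃ i g : BiRing k n m, i ∈ I ∧ i ∈ biComponent k n m (a+1,b) ∧
      g ∈ biComponent k n m (a,b) ∧ f = i + g * h := by
  obtain ⟨p, hp, q, hq, rfl⟩ := Submodule.mem_sup.mp hfJ
  obtain ⟨r, rfl⟩ := Ideal.mem_span_singleton'.mp hq
  refine ⟨weightedHomogeneousComponent (wB n m) (a+1,b) p,
    weightedHomogeneousComponent (wB n m) (a,b) r,
    aux_component_mem_of_mem k n m hI hp _,
    weightedHomogeneousComponent_isWeightedHomogeneous _ _,
    weightedHomogeneousComponent_isWeightedHomogeneous _ _, ?_⟩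
  have := weightedHomogeneousComponent_eq_self
    ((mem_weightedHomogeneousSubmodule _ _ _ _).mp hf)
  rw [← this, map_add, aux_wHC_mul_succ k n m hh]

lemma aux_mem_decomp_zero {I : Ideal (BiRing k n m)} (hI : IsBihomogeneous k n m I)
    {h : BiRing k n m} (hh : h.IsWeightedHomogeneous (wB n m) (1,0)) {b : ℕ}
    {f : BiRing k n m} (hf : f ∈ biComponent k n m (0,b)) (hfJ : f ∈ I ⊔ Ideal.span {h}) :
    f ∈ I := by
  obtain ⟨p, hp, q, hq, rfl⟩ := Submodule.mem_sup.mp hfJ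
  obtain ⟨r, rfl⟩ := Ideal.mem_span_singleton'.mp hq
  have := weightedHomogeneousComponent_eq_self
    ((mem_weightedHomogeneousSubmodule _ _ _ _).mp hf)
  rw [← this, map_add, aux_wHC_mul_zero k n m hh, add_zero]
  exact aux_component_mem_of_mem k n m hI hp _

lemma aux_single_of_weight_eq {s : Vars n m →₀ ℕ}
    (hs : Finsupp.weight (wB n m) s = (1,0)) :
    ∃ i : Fin (n+1), s = Finsupp.single (Sum.inl i) 1 := by
  have h2 : ∀ j : Fin (m+1), s (Sum.inr j) = 0 := by
    intro j
    have := Finsupp.le_weight (fun v => (wB n m v).2) (s := Sum.inr j) (by simp [wB]) s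
    rw [← aux_weight_snd, hs] at this
    omega
  have h1 : Finsupp.weight (fun v => (wB n m v).1) s = 1 := by
    rw [← aux_weight_fst, hs]
  have hsupp : ∀ v ∈ s.support, (wB n m v).1 = 1 := by
    rintro (i | j) hv
    · simp [wB]
    · exact absurd (h2 j) (Finsupp.mem_support_iff.mp hv)
  have hsum : ∑ v ∈ s.support, s v = 1 := by
    rw [Finsupp.weight_apply, Finsupp.sum] at h1
    rw [← h1]
    apply Finset.sum_congr rfl
    intro v hv
    have h' : (wB n m v).1 = 1 := hsupp v hv
    rw [smul_eq_mul, h', mul_one]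
  have hcard : s.support.card = 1 := by
    have hle : s.support.card ≤ ∑ v ∈ s.support, s v := by
      rw [Finset.card_eq_sum_ones]
      exact Finset.sum_le_sum
        (fun v hv => Nat.one_le_iff_ne_zero.mpr (Finsupp.mem_support_iff.mp hv))
    have hne : s.support.Nonempty := by
      by_contra hcon
      rw [Finset.not_nonempty_iff_eq_empty] at hcon
      rw [hcon, Finset.sum_empty] at hsum
      omega
    have := Finset.Nonempty.card_pos hne
    omega
  obtain ⟨v₀, hv₀⟩ := Finset.card_eq_one.mp hcard
  have hs1 : s v₀ = 1 := by
    rw [hv₀, Finset.sum_singleton] at hsum; exact hsum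
  have hsingle : s = Finsupp.single v₀ 1 := by
    rw [← hs1]
    exact ((Finsupp.support_eq_singleton).mp hv₀).2
  cases v₀ with
  | inl i => exact ⟨i, hsingle⟩
  | inr j =>
    exfalso
    rw [h2 j] at hs1
    omega

lemma aux_linForm_isHomogeneous (v : Fin (n+1) → k) :
    (linForm k n m v).IsWeightedHomogeneous (wB n m) (1,0) := by
  rw [← mem_weightedHomogeneousSubmodule]
  apply Submodule.sum_mem
  intro i _
  rw [← smul_eq_C_mul]
  apply Submodule.smul_mem
  rw [mem_weightedHomogeneousSubmodule]
  have := isWeightedHomogeneous_X k (wB n m) (Sum.inl i : Vars n m)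
  simpa [wB] using this

lemma aux_eq_linForm_of_isHomogeneous {h : BiRing k n m}
    (hh : h.IsWeightedHomogeneous (wB n m) (1,0)) :
    ∃ c : Fin (n+1) → k, h = linForm k n m c := by
  refine ⟨fun i => coeff (Finsupp.single (Sum.inl i) 1) h, ?_⟩
  ext s
  rw [linForm, coeff_sum]
  by_cases hs : coeff s h = 0
  · rw [hs]
    symm
    apply Finset.sum_eq_zero
    intro i _
    rw [coeff_C_mul, coeff_X']
    split_ifs with h'
    · rw [h', hs, zero_mul]
    · rw [mul_zero]
  · obtain ⟨i, rfl⟩ := aux_single_of_weight_eq n m (hh hs)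
    rw [Finset.sum_eq_single i]
    · rw [coeff_C_mul, coeff_X', if_pos rfl, mul_one]
    · intro i' _ hne
      rw [coeff_C_mul, coeff_X', if_neg (by
        intro hcon
        exact hne (by
          have := Finsupp.single_left_injective (one_ne_zero) hcon
          simpa using this)), mul_zero]
    · intro hcon
      exact absurd (Finset.mem_univ i) hcon

lemma aux_generic_span {k : Type*} [Field k] {W : Type*} [AddCommGroup W] [Module k W]
    [FiniteDimensional k W] {N nn : ℕ} (e : Module.Basis (Fin N) k W)
    {ι : Type*} [Fintype ι]
    (F : (Fin nn → k) → ι → W) (A : ι → Fin N → MvPolynomial (Fin nn) k)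
    (hA : ∀ v j t, e.repr (F v j) t = eval v (A j t))
    (c : Fin nn → k) (hc : Submodule.span k (Set.range (F c)) = ⊤) :
    ∃ P : MvPolynomial (Fin nn) k, P ≠ 0 ∧
      ∀ v, eval v P ≠ 0 → Submodule.span k (Set.range (F v)) = ⊤ := by
  classical
  obtain ⟨s, hs_sub, hs_span, hs_li⟩ := exists_linearIndependent k (Set.range (F c))
  rw [hc] at hs_span
  let bs : Module.Basis s k W := Module.Basis.mk hs_li (by rw [Subtype.range_coe, hs_span])
  haveI : Fintype s := FiniteDimensional.fintypeBasisIndex bs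
  have hcard : Fintype.card s = N := by
    rw [← Module.finrank_eq_card_basis bs, Module.finrank_eq_card_basis e, Fintype.card_fin]
  let equiv : Fin N ≃ s := (Fintype.equivFinOfCardEq hcard).symm
  let bN : Module.Basis (Fin N) k W := bs.reindex equiv.symm
  have hbN : ∀ t, (bN t : W) ∈ Set.range (F c) := by
    intro t
    have h1 : bN t = bs (equiv t) := by simp [bN]
    rw [h1]
    have h2 : bs (equiv t) = ((equiv t : s) : W) := by rw [Module.Basis.mk_apply]
    rw [h2]
    exact hs_sub (equiv t).2
  choose σ hσ using fun t => hbN t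
  have hσ' : F c ∘ σ = bN := funext hσ
  have hdet_c : IsUnit (e.det (F c ∘ σ)) := by
    rw [hσ']
    exact (Module.Basis.is_basis_iff_det e).mp ⟨bN.linearIndependent, bN.span_eq⟩
  set Ap : Matrix (Fin N) (Fin N) (MvPolynomial (Fin nn) k) :=
    Matrix.of fun t t' => A (σ t') t with hAp
  have hkey : ∀ v, eval v Ap.det = e.det (F v ∘ σ) := by
    intro v
    rw [show eval v Ap.det
        = ((eval v : MvPolynomial (Fin nn) k →+* k).mapMatrix Ap).det from
        (RingHom.map_det _ _), Module.Basis.det_apply]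
    congr 1
    ext t t'
    simp only [RingHom.mapMatrix_apply, Matrix.map_apply, Module.Basis.toMatrix_apply,
      Function.comp_apply, hA, hAp, Matrix.of_apply]
  refine ⟨Ap.det, ?_, ?_⟩
  · intro h0
    rw [← hkey c] at hdet_c
    rw [h0] at hdet_c
    simp at hdet_c
  · intro v hv
    rw [hkey v] at hv
    have := ((Module.Basis.is_basis_iff_det e).mpr (isUnit_iff_ne_zero.mpr hv)).2
    rw [eq_top_iff, ← this]
    apply Submodule.span_mono
    rw [Set.range_comp]
    exact Set.image_subset_range _ _

lemma aux_span_range_coe_basis {k M : Type*} [Field k] [AddCommGroup M] [Module k M]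
    {S : Submodule k M} {ι : Type*} (c : Module.Basis ι k S) :
    Submodule.span k (Set.range fun i => (c i : M)) = S := by
  conv_rhs => rw [← Submodule.map_subtype_top S, ← c.span_eq, Submodule.map_span]
  congr 1
  rw [← Set.range_comp]
  rfl

lemma aux_subtype_span_top_iff {k M : Type*} [Field k] [AddCommGroup M] [Module k M]
    {S : Submodule k M} {ι : Type*} (G : ι → S) :
    Submodule.span k (Set.range G) = ⊤ ↔
      S ≤ Submodule.span k (Set.range fun j => (G j : M)) := by
  constructor
  · intro h x hx
    have h1 : (⟨x, hx⟩ : S) ∈ Submodule.span k (Set.range G) := h ▸ Submodule.mem_top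
    have h2 := Submodule.mem_map_of_mem (f := S.subtype) h1
    rw [Submodule.map_span] at h2
    rw [← Set.range_comp] at h2; exact h2
  · intro h
    rw [eq_top_iff]
    rintro ⟨x, hx⟩ -
    have hx' : x ∈ Submodule.span k (Set.range fun j => (G j : M)) := h hx
    have h2 : x ∈ Submodule.map S.subtype (Submodule.span k (Set.range G)) := by
      rw [Submodule.map_span]
      rw [← Set.range_comp]; exact hx'
    obtain ⟨y, hy, hyx⟩ := h2
    have h3 : y = ⟨x, hx⟩ := Subtype.ext hyx
    rw [← h3]
    exact hy

lemma aux_key_succ (I : Ideal (BiRing k n m)) (hI : IsBihomogeneous k n m I) (a' b : ℕ)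
    (c : Fin (n+1) → k)
    (hc : biComponent k n m (a'+1, b) ≤
      (I ⊔ Ideal.span {linForm k n m c}).restrictScalars k) :
    ∃ P : MvPolynomial (Fin (n+1)) k, P ≠ 0 ∧
      ∀ v : Fin (n+1) → k, eval v P ≠ 0 →
        biComponent k n m (a'+1, b) ≤
          (I ⊔ Ideal.span {linForm k n m v}).restrictScalars k := by
  classical
  set W := biComponent k n m (a'+1, b) with hW
  set Ws := (I.restrictScalars k) ⊓ W with hWs
  haveI : FiniteDimensional k Ws := Submodule.finiteDimensional_of_le inf_le_right
  set V' := biComponent k n m (a', b) with hV'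
  set e : Module.Basis (Fin (Module.finrank k W)) k W := Module.finBasis k W with he
  set eb : Module.Basis (Fin (Module.finrank k Ws)) k Ws := Module.finBasis k Ws with heb
  set mb : Module.Basis (Fin (Module.finrank k V')) k V' := Module.finBasis k V' with hmb
  have hmemW_eb : ∀ i, ((eb i : BiRing k n m)) ∈ W := fun i => (eb i).2.2
  have hdeg : ((1,0) : ℕ × ℕ) + (a', b) = (a'+1, b) := by
    simp [Prod.ext_iff, Nat.add_comm]
  have hmul_mem : ∀ (v : Fin (n+1) → k) (j),
      linForm k n m v * (mb j : BiRing k n m) ∈ W := by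
    intro v j
    have := (aux_linForm_isHomogeneous k n m v).mul
      ((mem_weightedHomogeneousSubmodule _ _ _ _).mp (mb j).2)
    rw [hdeg] at this
    exact this
  have hX_mem : ∀ (i' : Fin (n+1)) (j),
      X (Sum.inl i') * (mb j : BiRing k n m) ∈ W := by
    intro i' j
    have hX : (X (Sum.inl i') : BiRing k n m).IsWeightedHomogeneous (wB n m) (1,0) := by
      have := isWeightedHomogeneous_X k (wB n m) (Sum.inl i' : Vars n m)
      simpa [wB] using this
    have := hX.mul ((mem_weightedHomogeneousSubmodule _ _ _ _).mp (mb j).2)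
    rw [hdeg] at this
    exact this
  set F : (Fin (n+1) → k) → (Fin (Module.finrank k Ws) ⊕ Fin (Module.finrank k V')) → W :=
    fun v => Sum.elim (fun i => ⟨(eb i : BiRing k n m), hmemW_eb i⟩)
      (fun j => ⟨linForm k n m v * (mb j : BiRing k n m), hmul_mem v j⟩) with hF
  set A : (Fin (Module.finrank k Ws) ⊕ Fin (Module.finrank k V')) →
      Fin (Module.finrank k W) → MvPolynomial (Fin (n+1)) k :=
    Sum.elim (fun i t => MvPolynomial.C (e.repr ⟨(eb i : BiRing k n m), hmemW_eb i⟩ t))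
      (fun j t => ∑ i', MvPolynomial.C
        (e.repr ⟨X (Sum.inl i') * (mb j : BiRing k n m), hX_mem i' j⟩ t) * X i') with hA'
  have hA : ∀ v j t, e.repr (F v j) t = eval v (A j t) := by
    rintro v (i | j) t
    · simp [hF, hA']
    · have hFsum : F v (Sum.inr j)
          = ∑ i', v i' • (⟨X (Sum.inl i') * (mb j : BiRing k n m), hX_mem i' j⟩ : W) := by
        apply Subtype.ext
        push_cast [hF]
        show (∑ i', C (v i') * X (Sum.inl i')) * ((mb j : BiRing k n m))
            = ∑ i', v i' • (X (Sum.inl i') * (mb j : BiRing k n m))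
        rw [Finset.sum_mul]
        apply Finset.sum_congr rfl
        intro i' _
        rw [← smul_eq_C_mul, smul_mul_assoc]
      rw [hFsum, hA']
      simp only [map_sum, map_smul, Finsupp.coe_finset_sum, Finset.sum_apply,
        Finsupp.coe_smul, Pi.smul_apply, smul_eq_mul, Sum.elim_inr, eval_C, eval_X,
        map_mul]
      apply Finset.sum_congr rfl
      intro i' _
      rw [mul_comm]
  have hspan_iff : ∀ v : Fin (n+1) → k,
      Submodule.span k (Set.range (F v)) = ⊤ ↔
        W ≤ (I ⊔ Ideal.span {linForm k n m v}).restrictScalars k := by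
    intro v
    rw [aux_subtype_span_top_iff (F v)]
    constructor
    · intro h f hf
      have h1 := h hf
      have h2 : Submodule.span k (Set.range fun j => ((F v j : BiRing k n m)))
          ≤ (I ⊔ Ideal.span {linForm k n m v}).restrictScalars k := by
        rw [Submodule.span_le]
        rintro _ ⟨j, rfl⟩
        cases j with
        | inl i =>
          exact Submodule.mem_sup_left ((eb i).2.1 : (eb i : BiRing k n m) ∈ I)
        | inr j =>
          exact Submodule.mem_sup_right
            (Ideal.mem_span_singleton.mpr (dvd_mul_right _ _))
      exact h2 h1
    · intro h f hf
      have hfJ : f ∈ I ⊔ Ideal.span {linForm k n m v} := h hf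
      obtain ⟨i, g, hiI, hiW, hgV, rfl⟩ :=
        aux_mem_decomp_succ k n m hI (aux_linForm_isHomogeneous k n m v) hf hfJ
      apply Submodule.add_mem
      · -- i is in the span of the eb-part
        have hiWs : i ∈ Ws := ⟨hiI, hiW⟩
        have h1 : i ∈ Submodule.span k (Set.range fun i' => ((eb i' : BiRing k n m))) := by
          rw [aux_span_range_coe_basis eb]
          exact hiWs
        refine Submodule.span_mono ?_ h1
        rintro _ ⟨i', rfl⟩
        exact ⟨Sum.inl i', rfl⟩
      · -- g * linForm is in the span of the mb-part
        have hg : g ∈ Submodule.span k (Set.range fun j => ((mb j : BiRing k n m))) := by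
          rw [aux_span_range_coe_basis mb]
          exact hgV
        have h2 := Submodule.mem_map_of_mem
          (f := LinearMap.mulLeft k (linForm k n m v)) hg
        rw [Submodule.map_span] at h2
        rw [mul_comm]
        refine Submodule.span_mono ?_ h2
        rintro _ ⟨_, ⟨j, rfl⟩, rfl⟩
        exact ⟨Sum.inr j, rfl⟩
  obtain ⟨P, hP0, hP⟩ := aux_generic_span e F A hA c ((hspan_iff c).mpr hc)
  exact ⟨P, hP0, fun v hv => (hspan_iff v).mp (hP v hv)⟩


/-- Assume `V(I)` is nonempty, `I` is generated in bidegrees `≤ (a,b)` and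
`HF_{R/I}(a,b) = HF_{R/I}(a+1,b)`. Then `(a,b)` is an admissible bidegree for `I` if and only if
`HF_{R/(I+⟨h'⟩)}(a,b) = 0` for a generic linear form `h'` of bidegree `(1,0)` (i.e. for all `h'`
whose coefficient vector lies in the nonvanishing locus of some nonzero polynomial). -/
theorem statement_5 (k : Type*) [Field k] (hk : Infinite k) (n m : ℕ)
    (I : Ideal (BiRing k n m)) (hI : IsBihomogeneous k n m I)
    (hne : (biprojZeros k n m (AlgebraicClosure k) I).Nonempty)
    (a b : ℕ) (hgen : GenInDegLE k n m I a b)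
    (hHF : HF k n m I a b = HF k n m I (a+1) b) :
    IsAdmissible k n m I a b ↔
      ∃ P : MvPolynomial (Fin (n+1)) k, P ≠ 0 ∧
        ∀ v : Fin (n+1) → k, eval v P ≠ 0 →
          HF k n m (I ⊔ Ideal.span {linForm k n m v}) a b = 0 := by
  constructor
  · rintro ⟨-, h, hhom, -, hHF0⟩
    cases a with
    | zero =>
      refine ⟨1, one_ne_zero, ?_⟩
      intro v _
      rw [aux_HF_eq_zero_iff]
      intro f hf
      have hfI : f ∈ I := aux_mem_decomp_zero k n m hI hhom hf
        ((aux_HF_eq_zero_iff k n m _ 0 b).mp hHF0 hf)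
      exact Submodule.mem_sup_left hfI
    | succ a' =>
      obtain ⟨c, rfl⟩ := aux_eq_linForm_of_isHomogeneous k n m hhom
      obtain ⟨P, hP0, hP⟩ := aux_key_succ k n m I hI a' b c
        ((aux_HF_eq_zero_iff k n m _ _ b).mp hHF0)
      exact ⟨P, hP0, fun v hv => (aux_HF_eq_zero_iff k n m _ _ b).mpr (hP v hv)⟩
  · rintro ⟨P, hP0, hP⟩
    haveI := hk
    have hex : ∃ v, eval v P ≠ 0 := by
      by_contra hcon
      push_neg at hcon
      exact hP0 (MvPolynomial.funext (fun x => by rw [hcon x, map_zero]))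
    obtain ⟨v, hv⟩ := hex
    exact ⟨hgen, linForm k n m v, aux_linForm_isHomogeneous k n m v, hHF, hP v hv⟩
end
end

section
/- Let I ⊆ R be a bihomogeneous ideal and let (a,b) ∈ ℤ² be an admissible bidegree for I. Then for every b' ≥ b one has the inclusions π(V(I)) ⊆ π_{b'}(V(I)) ⊆ π_b(V(I)). -/
open MvPolynomial

noncomputable section

variable (k : Type*) [Field k] (n m : ℕ)

variable (K : Type*) [Field K] [Algebra k K]

/-- If `(a,b)` is an admissible bidegree for the bihomogeneous ideal `I`, then
for every `b' ≥ b` one has `π(V(I)) ⊆ π_{b'}(V(I)) ⊆ π_b(V(I))` (zero loci over the algebraic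
closure of `k`). -/
theorem statement_6 (k : Type*) [Field k] (hk : Infinite k) (n m : ℕ)
    (I : Ideal (BiRing k n m)) (hI : IsBihomogeneous k n m I)
    (a b : ℕ) (hadm : IsAdmissible k n m I a b) :
    ∀ b' : ℕ, b ≤ b' →
      piV k n m (AlgebraicClosure k) I
          ⊆ projZeros k n (AlgebraicClosure k) (Jb k n m I b') ∧
      projZeros k n (AlgebraicClosure k) (Jb k n m I b')
          ⊆ projZeros k n (AlgebraicClosure k) (Jb k n m I b) := by
  intro b' hb'
  constructor
  · rintro ξ hξ f hf
    simp only [piV, Set.mem_image] at hξ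
    obtain ⟨p, hp, rfl⟩ := hξ
    have hf' : ιX k n m f ∈ Submodule.colon I ((myId k n m ^ b' : Ideal (BiRing k n m)) : Set (BiRing k n m)) := hf
    obtain ⟨j, hj⟩ : ∃ j, p.2.rep j ≠ 0 := by
      by_contra h
      push_neg at h
      exact p.2.rep_nonzero (funext h)
    have hXmem : (X (Sum.inr j) : BiRing k n m) ∈ myId k n m := by
      unfold myId; exact Ideal.subset_span ⟨j, rfl⟩
    have hXj : (X (Sum.inr j) : BiRing k n m) ^ b' ∈ myId k n m ^ b' :=
      Ideal.pow_mem_pow hXmem b'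
    have h0 := hp _ (Submodule.mem_colon.mp hf' _ hXj)
    rw [smul_eq_mul, map_mul, map_pow, aeval_X] at h0
    simp only [ιX, aeval_rename, Sum.elim_comp_inl, Sum.elim_inl, Sum.elim_inr] at h0
    rcases mul_eq_zero.mp h0 with h | h
    · exact h
    · exact absurd h (pow_ne_zero _ hj)
  · intro ξ hξ f hf
    have hf' : ιX k n m f ∈ Submodule.colon I ((myId k n m ^ b' : Ideal (BiRing k n m)) : Set (BiRing k n m)) :=
      Submodule.colon_mono le_rfl (SetLike.coe_subset_coe.mpr (Ideal.pow_le_pow_right hb')) hf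
    exact hξ f hf'
end
end
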